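/- Let G be a finitely generated group with Cayley graph Γ, and H ≤ G. A subset X of G is H-almost invariant (HX = X and Xg H-almost equal to X for all g) if and only if HX = X and ∂X is H-finite, where ∂X = {x ∈ X : ∃ x' ∉ X adjacent to x in Γ}. -/

import Mathlib

open scoped Pointwise

/-- A subset `A` of `G` is `H`-finite if it is contained in finitely many
right cosets `Hg` of the subgroup `H`. -/
def HFinite {G : Type*} [Group G] (H : Subgroup G) (A : Set G) : Prop :=
  ∃ F : Finset G, A ⊆ ⋃ g ∈ F, ((H : Set G) * {g} : Set G)

/-- The boundary of `X` with respect to the generating set `S`. -/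
def bdry {G : Type*} [Group G] (S : Set G) (X : Set G) : Set G :=
  {x ∈ X | ∃ s ∈ S, x * s ∉ X}

section Aux

variable {G : Type*} [Group G] {H : Subgroup G}

open scoped Classical

private lemma mem_mul_singleton {A : Set G} {g x : G} : x ∈ A * {g} ↔ x * g⁻¹ ∈ A := by
  rw [Set.mul_singleton]
  constructor
  · rintro ⟨a, ha, rfl⟩; simpa using ha
  · intro h; exact ⟨x * g⁻¹, h, by group⟩

private lemma hfin_empty : HFinite H (∅ : Set G) := ⟨∅, by simp⟩

private lemma hfin_mono {A B : Set G} (hAB : A ⊆ B) (h : HFinite H B) : HFinite H A := by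
  obtain ⟨F, hF⟩ := h; exact ⟨F, hAB.trans hF⟩

private lemma hfin_union {A B : Set G} (hA : HFinite H A) (hB : HFinite H B) :
    HFinite H (A ∪ B) := by
  obtain ⟨F1, h1⟩ := hA; obtain ⟨F2, h2⟩ := hB
  refine ⟨F1 ∪ F2, fun x hx => ?_⟩
  rcases hx with hx | hx
  · obtain ⟨g, hg, hxg⟩ := Set.mem_iUnion₂.1 (h1 hx)
    exact Set.mem_iUnion₂.2 ⟨g, Finset.mem_union_left _ hg, hxg⟩
  · obtain ⟨g, hg, hxg⟩ := Set.mem_iUnion₂.1 (h2 hx)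
    exact Set.mem_iUnion₂.2 ⟨g, Finset.mem_union_right _ hg, hxg⟩

private lemma hfin_mul {A : Set G} (g : G) (hA : HFinite H A) : HFinite H (A * {g}) := by
  obtain ⟨F, hF⟩ := hA
  refine ⟨F.image (· * g), fun x hx => ?_⟩
  rw [mem_mul_singleton] at hx
  obtain ⟨f, hf, hxf⟩ := Set.mem_iUnion₂.1 (hF hx)
  refine Set.mem_iUnion₂.2 ⟨f * g, Finset.mem_image_of_mem _ hf, ?_⟩
  rw [mem_mul_singleton] at hxf ⊢
  simpa [mul_assoc] using hxf

private lemma hfin_biUnion {T : Finset G} {f : G → Set G}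
    (h : ∀ s ∈ T, HFinite H (f s)) : HFinite H (⋃ s ∈ T, f s) := by
  classical
  induction T using Finset.induction with
  | empty => simpa using (hfin_empty : HFinite H (∅ : Set G))
  | insert a s hs ih =>
    rw [Finset.set_biUnion_insert]
    exact hfin_union (h _ (Finset.mem_insert_self _ _))
      (ih fun s hs' => h s (Finset.mem_insert_of_mem hs'))

end Aux

/-- Cohen's characterization of `H`-almost invariant sets. -/
theorem almostInv_iff_bdry_HFinite {G : Type*} [Group G] (S : Set G)
    (hSfin : S.Finite) (hSsymm : ∀ s ∈ S, s⁻¹ ∈ S)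
    (hSgen : Subgroup.closure S = (⊤ : Subgroup G))
    (H : Subgroup G) (X : Set G) :
    ((H : Set G) * X = X ∧
        ∀ g : G, HFinite H ((X \ ((X * {g} : Set G))) ∪ (((X * {g} : Set G)) \ X))) ↔
      ((H : Set G) * X = X ∧ HFinite H (bdry S X)) := by
  classical
  set D : G → Set G := fun g => (X \ (X * {g} : Set G)) ∪ ((X * {g} : Set G) \ X) with hD
  have hmemD : ∀ g x : G, x ∈ D g ↔
      (x ∈ X ∧ x * g⁻¹ ∉ X) ∨ (x * g⁻¹ ∈ X ∧ x ∉ X) := by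
    intro g x
    simp [hD, Set.mem_diff, mem_mul_singleton]
  constructor
  · rintro ⟨hHX, hfin⟩
    refine ⟨hHX, ?_⟩
    have hsub : bdry S X ⊆ ⋃ s ∈ hSfin.toFinset, D s⁻¹ := by
      rintro x ⟨hx, s, hs, hxs⟩
      refine Set.mem_iUnion₂.2 ⟨s, hSfin.mem_toFinset.2 hs, ?_⟩
      rw [hmemD]
      left
      simpa using ⟨hx, hxs⟩
    exact hfin_mono hsub (hfin_biUnion fun s _ => hfin s⁻¹)
  · rintro ⟨hHX, hfin⟩
    have key : ∀ g ∈ Subgroup.closure S, HFinite H (D g) := by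
      intro g hg
      induction hg using Subgroup.closure_induction with
      | mem s hs =>
        -- D s ⊆ bdry ∪ bdry * {s}
        have hsub : D s ⊆ bdry S X ∪ bdry S X * {s} := by
          intro x hx
          rw [hmemD] at hx
          rcases hx with ⟨h1, h2⟩ | ⟨h1, h2⟩
          · left
            exact ⟨h1, s⁻¹, hSsymm s hs, h2⟩
          · right
            rw [mem_mul_singleton]
            exact ⟨h1, s, hs, by simpa using h2⟩
        exact hfin_mono hsub (hfin_union hfin (hfin_mul s hfin))
      | one =>
        have : D 1 = ∅ := by
          ext x; rw [hmemD]; simp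
        rw [this]; exact hfin_empty
      | mul a b _ _ ha hb =>
        have hsub : D (a * b) ⊆ D b ∪ D a * {b} := by
          intro x hx
          rw [hmemD] at hx
          by_cases hxb : x * b⁻¹ ∈ X
          · rcases hx with ⟨h1, h2⟩ | ⟨h1, h2⟩
            · right
              rw [mem_mul_singleton, hmemD]
              left
              refine ⟨hxb, ?_⟩
              rwa [mul_assoc, ← mul_inv_rev]
            · left
              rw [hmemD]
              right
              exact ⟨hxb, h2⟩
          · rcases hx with ⟨h1, h2⟩ | ⟨h1, h2⟩
            · left
              rw [hmemD]
              left
              exact ⟨h1, hxb⟩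
            · right
              rw [mem_mul_singleton, hmemD]
              right
              refine ⟨?_, hxb⟩
              rwa [mul_assoc, ← mul_inv_rev]
        exact hfin_mono hsub (hfin_union hb (hfin_mul b ha))
      | inv a _ ha =>
        have hsub : D a⁻¹ ⊆ D a * {a⁻¹} := by
          intro x hx
          rw [hmemD] at hx
          rw [mem_mul_singleton, hmemD]
          simp only [inv_inv] at hx ⊢
          rcases hx with ⟨h1, h2⟩ | ⟨h1, h2⟩
          · right
            constructor
            · simpa using h1
            · simpa using h2
          · left
            constructor
            · simpa using h1
            · simpa using h2
        exact hfin_mono hsub (hfin_mul a⁻¹ ha)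

    exact ⟨hHX, fun g => key g (by rw [hSgen]; trivial)⟩
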